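/- Let B̃ : ℝ → ℂ be C¹ with B̃' ∈ L¹(ℝ). Then for all t ≠ 0, ρ ≥ 0, φ ∈ ℝ, |∫_{−π}^{π} e^{i t sin θ} cos θ · B̃(ρ cos(θ − φ)) dθ| ≤ (2/|t|) ∫_{−ρ}^{ρ} |B̃'(z)| dz ≤ (2/|t|) ‖B̃'‖_{L¹(ℝ)}. -/

import Mathlib

open MeasureTheory Complex

/-- Oscillatory-integral estimate: for `B̃ : ℝ → ℂ` of class `C¹` with
`B̃' ∈ L¹(ℝ)`, all `t ≠ 0`, `ρ ≥ 0`, `φ ∈ ℝ`: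
`|∫_{−π}^{π} e^{i t sin θ} cos θ · B̃(ρ cos(θ − φ)) dθ|
  ≤ (2/|t|) ∫_{−ρ}^{ρ} |B̃'(z)| dz ≤ (2/|t|) ‖B̃'‖_{L¹(ℝ)}`. -/
theorem oscillatory_integral_improved (B : ℝ → ℂ)
    (hB : ContDiff ℝ 1 B) (hB' : Integrable (deriv B)) :
    ∀ t : ℝ, t ≠ 0 → ∀ ρ ≥ (0 : ℝ), ∀ φ : ℝ,
      ‖∫ θ in (-Real.pi)..Real.pi,
          Complex.exp (Complex.I * (t : ℂ) * (Real.sin θ : ℂ)) * (Real.cos θ : ℂ) *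
            B (ρ * Real.cos (θ - φ))‖ ≤ (2 / |t|) * ∫ z in (-ρ)..ρ, ‖deriv B z‖ ∧
        (2 / |t|) * (∫ z in (-ρ)..ρ, ‖deriv B z‖) ≤ (2 / |t|) * ∫ z : ℝ, ‖deriv B z‖ := by
  have hBc : Continuous B := hB.continuous
  have hB'c : Continuous (deriv B) := hB.continuous_deriv le_rfl
  have hBd : Differentiable ℝ B := hB.differentiable one_ne_zero
  have hgc : Continuous (fun z => ‖deriv B z‖) := hB'c.norm
  intro t ht ρ hρ φ
  have hpi : (-Real.pi : ℝ) ≤ Real.pi := by linarith [Real.pi_pos]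
  constructor
  · -- main estimate
    set u : ℝ → ℂ := fun θ => Complex.exp (Complex.I * t * Real.sin θ) with hu
    set v : ℝ → ℂ := fun θ => B (ρ * Real.cos (θ - φ)) with hv
    set u' : ℝ → ℂ := fun θ => u θ * (Complex.I * t * Real.cos θ) with hu'
    set v' : ℝ → ℂ := fun θ => (ρ * -Real.sin (θ - φ)) • deriv B (ρ * Real.cos (θ - φ)) with hv'
    have hud : ∀ x ∈ Set.uIcc (-Real.pi) Real.pi, HasDerivAt u (u' x) x := by
      intro x _
      have h1 : HasDerivAt (fun θ : ℝ => Complex.I * (t : ℂ) * (Real.sin θ : ℂ))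
          (Complex.I * t * Real.cos x) x := by
        have h0 := (Real.hasDerivAt_sin x).ofReal_comp
        simpa [mul_comm, mul_left_comm] using h0.const_mul (Complex.I * (t : ℂ))
      exact h1.cexp
    have hfin : ∀ x : ℝ, HasDerivAt (fun θ : ℝ => ρ * Real.cos (θ - φ))
        (ρ * -Real.sin (x - φ)) x := by
      intro x
      have h0 : HasDerivAt (fun θ : ℝ => θ - φ) 1 x := (hasDerivAt_id x).sub_const φ
      have h1 : HasDerivAt (fun θ : ℝ => Real.cos (θ - φ)) (-Real.sin (x - φ)) x := by
        simpa [Function.comp_def] using (Real.hasDerivAt_cos (x - φ)).comp x h0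
      simpa using h1.const_mul ρ
    have hvd : ∀ x ∈ Set.uIcc (-Real.pi) Real.pi, HasDerivAt v (v' x) x := by
      intro x _
      have := (hBd (ρ * Real.cos (x - φ))).hasDerivAt.scomp x (hfin x)
      simpa [hv, hv', Function.comp_def] using this
    have hu'c : Continuous u' := by
      apply Continuous.mul
      · exact Complex.continuous_exp.comp
          (continuous_const.mul (Complex.continuous_ofReal.comp Real.continuous_sin))
      · exact continuous_const.mul (Complex.continuous_ofReal.comp Real.continuous_cos)
    have hv'c : Continuous v' := by
      apply Continuous.fun_smul
      · exact continuous_const.mul ((Real.continuous_sin.comp (by continuity)).neg)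
      · exact hB'c.comp (by continuity)
    have hibp := intervalIntegral.integral_mul_deriv_eq_deriv_mul hud hvd
      (hu'c.intervalIntegrable _ _) (hv'c.intervalIntegrable _ _)
    -- boundary terms cancel
    have hub : u Real.pi = 1 ∧ u (-Real.pi) = 1 := by
      constructor <;> simp [hu, Real.sin_pi]
    have hvb : v Real.pi = v (-Real.pi) := by
      have : Real.cos (Real.pi - φ) = Real.cos (-Real.pi - φ) := by
        rw [show -Real.pi - φ = -(Real.pi + φ) by ring, Real.cos_neg,
          Real.cos_sub, Real.cos_add]
        simp
      simp [hv, this]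
    have hibp' : (∫ x in (-Real.pi)..Real.pi, u' x * v x)
        = - ∫ x in (-Real.pi)..Real.pi, u x * v' x := by
      rw [hibp, hub.1, hub.2, hvb]; ring
    have hit : (Complex.I * (t : ℂ)) ≠ 0 := by
      simp [Complex.ext_iff, ht]
    have hkey : (∫ θ in (-Real.pi)..Real.pi,
        Complex.exp (Complex.I * (t : ℂ) * (Real.sin θ : ℂ)) * (Real.cos θ : ℂ) *
          B (ρ * Real.cos (θ - φ)))
        = (Complex.I * t)⁻¹ * ∫ x in (-Real.pi)..Real.pi, u' x * v x := by
      rw [← intervalIntegral.integral_const_mul]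
      apply intervalIntegral.integral_congr
      intro x _
      field_simp [hu, hv, hu']
      simp only [hu', hu, hv]
      have ht' : (t:ℂ) ≠ 0 := Complex.ofReal_ne_zero.mpr ht
      linear_combination (-(Complex.I * Complex.exp (Complex.I * (t : ℂ) * (Real.sin x : ℂ)) * (Real.cos x : ℂ) * B (ρ * Real.cos (x - φ)))) * (mul_inv_cancel₀ ht')
    have hnormuv : ∀ x : ℝ, ‖u x * v' x‖
        = |ρ * Real.sin (x - φ)| * ‖deriv B (ρ * Real.cos (x - φ))‖ := by
      intro x
      have h1 : ‖u x‖ = 1 := by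
        rw [hu]
        have : Complex.I * (t : ℂ) * (Real.sin x : ℂ)
            = ((t * Real.sin x : ℝ) : ℂ) * Complex.I := by push_cast; ring
        simp only [this]
        exact Complex.norm_exp_ofReal_mul_I _
      rw [norm_mul, h1, one_mul, hv', norm_smul, Real.norm_eq_abs]
      congr 1
      rw [abs_mul, abs_mul, abs_neg]
    -- change of variables for the norm integral
    have hHc : Continuous (fun θ : ℝ => |ρ * Real.sin θ| * ‖deriv B (ρ * Real.cos θ)‖) := by
      apply Continuous.mul
      · exact (continuous_const.mul Real.continuous_sin).abs
      · exact hgc.comp (continuous_const.mul Real.continuous_cos)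
    set H : ℝ → ℝ := fun θ => |ρ * Real.sin θ| * ‖deriv B (ρ * Real.cos θ)‖ with hH
    have hper : Function.Periodic H (2 * Real.pi) := by
      intro x; simp [hH, Real.sin_add_two_pi, Real.cos_add_two_pi]
    have hA : (∫ θ in (-Real.pi)..Real.pi, H (θ - φ)) = ∫ θ in (-Real.pi)..Real.pi, H θ := by
      rw [intervalIntegral.integral_comp_sub_right H φ]
      have h := hper.intervalIntegral_add_eq (-Real.pi - φ) (-Real.pi)
      have h1 : -Real.pi - φ + 2 * Real.pi = Real.pi - φ := by ring
      have h2 : -Real.pi + 2 * Real.pi = Real.pi := by ring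
      rw [h1, h2] at h; exact h
    have hHeven : ∀ x, H (-x) = H x := by
      intro x; simp [hH, Real.sin_neg, Real.cos_neg, mul_neg, abs_neg]
    have hB2 : (∫ θ in (-Real.pi)..(0:ℝ), H θ) = ∫ θ in (0:ℝ)..Real.pi, H θ := by
      have h := intervalIntegral.integral_comp_neg (a := (0:ℝ)) (b := Real.pi) H
      simp only [neg_zero] at h
      rw [← h]
      apply intervalIntegral.integral_congr
      intro x _; exact hHeven x
    have hC : (∫ θ in (0:ℝ)..Real.pi, H θ) = ∫ z in (-ρ)..ρ, ‖deriv B z‖ := by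
      have hf : ∀ x ∈ Set.uIcc (0:ℝ) Real.pi, HasDerivAt (fun θ => ρ * Real.cos θ)
          ((fun θ => ρ * -Real.sin θ) x) x := by
        intro x _
        simpa using (Real.hasDerivAt_cos x).const_mul ρ
      have hcv := intervalIntegral.integral_comp_smul_deriv hf
        (by fun_prop : Continuous fun θ => ρ * -Real.sin θ).continuousOn hgc
      simp only [Real.cos_zero, Real.cos_pi, mul_one] at hcv
      have heq : (∫ θ in (0:ℝ)..Real.pi, H θ)
          = ∫ θ in (0:ℝ)..Real.pi, -((ρ * -Real.sin θ) • ‖deriv B (ρ * Real.cos θ)‖) := by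
        apply intervalIntegral.integral_congr
        intro x hx
        rw [Set.uIcc_of_le Real.pi_pos.le] at hx
        have hs : 0 ≤ Real.sin x := Real.sin_nonneg_of_nonneg_of_le_pi hx.1 hx.2
        rw [hH]
        simp only [smul_eq_mul]
        rw [_root_.abs_of_nonneg (mul_nonneg hρ hs)]
        ring
      simp only [Function.comp] at hcv
      rw [heq, intervalIntegral.integral_neg, hcv,
        show ρ * -1 = -ρ by ring, intervalIntegral.integral_symm (-ρ) ρ, neg_neg]
    have hsum : (∫ θ in (-Real.pi)..Real.pi, H θ)
        = 2 * ∫ z in (-ρ)..ρ, ‖deriv B z‖ := by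
      rw [← intervalIntegral.integral_add_adjacent_intervals
        (a := -Real.pi) (b := 0) (c := Real.pi)
        (hHc.intervalIntegrable _ _) (hHc.intervalIntegrable _ _), hB2, hC]
      ring
    -- put everything together
    calc ‖∫ θ in (-Real.pi)..Real.pi,
          Complex.exp (Complex.I * (t : ℂ) * (Real.sin θ : ℂ)) * (Real.cos θ : ℂ) *
            B (ρ * Real.cos (θ - φ))‖
        = ‖(Complex.I * (t:ℂ))⁻¹‖ * ‖∫ x in (-Real.pi)..Real.pi, u x * v' x‖ := by
          rw [hkey, hibp', norm_mul, norm_neg]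
      _ ≤ |t|⁻¹ * ∫ x in (-Real.pi)..Real.pi, ‖u x * v' x‖ := by
          apply mul_le_mul
          · rw [norm_inv, norm_mul, Complex.norm_I, one_mul, Complex.norm_real,
              Real.norm_eq_abs]
          · exact intervalIntegral.norm_integral_le_integral_norm hpi
          · exact norm_nonneg _
          · positivity
      _ = |t|⁻¹ * ∫ x in (-Real.pi)..Real.pi, H (x - φ) := by
          congr 1
          apply intervalIntegral.integral_congr
          intro x _
          show ‖u x * v' x‖ = H (x - φ)
          exact hnormuv x
      _ = |t|⁻¹ * (2 * ∫ z in (-ρ)..ρ, ‖deriv B z‖) := by rw [hA, hsum]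
      _ = (2 / |t|) * ∫ z in (-ρ)..ρ, ‖deriv B z‖ := by ring
  · -- second inequality
    have h2 : (∫ z in (-ρ)..ρ, ‖deriv B z‖) ≤ ∫ z : ℝ, ‖deriv B z‖ := by
      rw [intervalIntegral.integral_of_le (by linarith)]
      exact setIntegral_le_integral hB'.norm
        (Filter.Eventually.of_forall fun x => norm_nonneg _)
    have hnn : (0:ℝ) ≤ 2 / |t| := by positivity
    exact mul_le_mul_of_nonneg_left h2 hnn
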